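/- Let p₃ > 0 and p₁ = 3p₃, and let D, R, I : ℝ → ℝ be differentiable functions satisfying D' = 2I·(p₁D - p₃R), R' = 2I·(p₁R - p₃D), I' = -2p₁(D² + R²) + 4p₃·D·R on ℝ. Set ρ := √(D(0)² + R(0)² + I(0)²) and assume (D(0),R(0),I(0)) ≠ (0,0,ρ) and ≠ (0,0,-ρ). Set W := √(8ρ²(D(0)-R(0))² + (D(0)+R(0))⁴) and τ₀ := -(sign I(0))·arcosh((4ρ² - (D(0)+R(0))²)/W). Then for all τ ∈ ℝ: D(τ) = ((D(0)+R(0))/2)·2ρ/(W·cosh(8p₃ρτ + τ₀) + (D(0)+R(0))²)^{1/2} + ((D(0)-R(0))/2)·4ρ²/(W·cosh(8p₃ρτ + τ₀) + (D(0)+R(0))²), R(τ) = ((D(0)+R(0))/2)·2ρ/(W·cosh(8p₃ρτ + τ₀) + (D(0)+R(0))²)^{1/2} - ((D(0)-R(0))/2)·4ρ²/(W·cosh(8p₃ρτ + τ₀) + (D(0)+R(0))²), and I(τ) = -ρ·W·sinh(8p₃ρτ + τ₀)/(W·cosh(8p₃ρτ + τ₀) + (D(0)+R(0))²). -/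

import Mathlib

/-- The real inverse hyperbolic cosine. -/
noncomputable def arcosh (x : ℝ) : ℝ := Real.log (x + Real.sqrt (x ^ 2 - 1))

lemma cosh_arcosh {x : ℝ} (hx : 1 ≤ x) : Real.cosh (arcosh x) = x := by
  have h1 : 0 ≤ x ^ 2 - 1 := by nlinarith
  have hs : Real.sqrt (x ^ 2 - 1) ^ 2 = x ^ 2 - 1 := Real.sq_sqrt h1
  have hsn : 0 ≤ Real.sqrt (x ^ 2 - 1) := Real.sqrt_nonneg _
  have hy : 0 < x + Real.sqrt (x ^ 2 - 1) := by linarith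
  unfold arcosh
  rw [Real.cosh_eq, Real.exp_neg, Real.exp_log hy]
  field_simp
  nlinarith [hs]

lemma sinh_arcosh {x : ℝ} (hx : 1 ≤ x) : Real.sinh (arcosh x) = Real.sqrt (x ^ 2 - 1) := by
  have h1 : 0 ≤ x ^ 2 - 1 := by nlinarith
  have hs : Real.sqrt (x ^ 2 - 1) ^ 2 = x ^ 2 - 1 := Real.sq_sqrt h1
  have hsn : 0 ≤ Real.sqrt (x ^ 2 - 1) := Real.sqrt_nonneg _
  have hy : 0 < x + Real.sqrt (x ^ 2 - 1) := by linarith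
  unfold arcosh
  rw [Real.sinh_eq, Real.exp_neg, Real.exp_log hy]
  field_simp
  nlinarith [hs]

lemma conserved (p₁ p₃ : ℝ) (D R I : ℝ → ℝ)
    (hD : ∀ τ, HasDerivAt D (2 * I τ * (p₁ * D τ - p₃ * R τ)) τ)
    (hR : ∀ τ, HasDerivAt R (2 * I τ * (p₁ * R τ - p₃ * D τ)) τ)
    (hI : ∀ τ, HasDerivAt I (-(2 * p₁ * (D τ ^ 2 + R τ ^ 2)) + 4 * p₃ * D τ * R τ) τ) :
    ∀ τ, D τ ^ 2 + R τ ^ 2 + I τ ^ 2 = D 0 ^ 2 + R 0 ^ 2 + I 0 ^ 2 := by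
  have key : ∀ τ, HasDerivAt (fun τ => D τ ^ 2 + R τ ^ 2 + I τ ^ 2) 0 τ := by
    intro τ
    have h := (((hD τ).pow 2).add ((hR τ).pow 2)).add ((hI τ).pow 2)
    refine h.congr_deriv ?_
    push_cast
    ring
  intro τ
  have := is_const_of_deriv_eq_zero (f := fun τ => D τ ^ 2 + R τ ^ 2 + I τ ^ 2)
    (fun τ => (key τ).differentiableAt) (fun τ => (key τ).deriv) τ 0
  simpa using this

noncomputable def FC (p₃ ρ W τ₀ u₀ : ℝ) (τ : ℝ) : ℝ :=
  W * Real.cosh (8 * p₃ * ρ * τ + τ₀) + u₀ ^ 2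

noncomputable def dC (p₃ ρ W τ₀ u₀ v₀ : ℝ) (τ : ℝ) : ℝ :=
  u₀ / 2 * (2 * ρ / Real.sqrt (FC p₃ ρ W τ₀ u₀ τ)) + v₀ / 2 * (4 * ρ ^ 2 / FC p₃ ρ W τ₀ u₀ τ)

noncomputable def rC (p₃ ρ W τ₀ u₀ v₀ : ℝ) (τ : ℝ) : ℝ :=
  u₀ / 2 * (2 * ρ / Real.sqrt (FC p₃ ρ W τ₀ u₀ τ)) - v₀ / 2 * (4 * ρ ^ 2 / FC p₃ ρ W τ₀ u₀ τ)

noncomputable def iC (p₃ ρ W τ₀ u₀ : ℝ) (τ : ℝ) : ℝ :=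
  -(ρ * W * Real.sinh (8 * p₃ * ρ * τ + τ₀)) / FC p₃ ρ W τ₀ u₀ τ

lemma FC_pos {W : ℝ} (hW : 0 < W) (p₃ ρ τ₀ u₀ τ : ℝ) : 0 < FC p₃ ρ W τ₀ u₀ τ := by
  have h := Real.one_le_cosh (8 * p₃ * ρ * τ + τ₀)
  unfold FC
  nlinarith

lemma cand_deriv (p₃ ρ W τ₀ u₀ v₀ : ℝ) (hW : 0 < W)
    (hWsq : W ^ 2 = 8 * ρ ^ 2 * v₀ ^ 2 + u₀ ^ 4) (τ : ℝ) :
    HasDerivAt (dC p₃ ρ W τ₀ u₀ v₀)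
      (2 * iC p₃ ρ W τ₀ u₀ τ * (3 * p₃ * dC p₃ ρ W τ₀ u₀ v₀ τ - p₃ * rC p₃ ρ W τ₀ u₀ v₀ τ)) τ ∧
    HasDerivAt (rC p₃ ρ W τ₀ u₀ v₀)
      (2 * iC p₃ ρ W τ₀ u₀ τ * (3 * p₃ * rC p₃ ρ W τ₀ u₀ v₀ τ - p₃ * dC p₃ ρ W τ₀ u₀ v₀ τ)) τ ∧
    HasDerivAt (iC p₃ ρ W τ₀ u₀)
      (-(2 * (3 * p₃) * (dC p₃ ρ W τ₀ u₀ v₀ τ ^ 2 + rC p₃ ρ W τ₀ u₀ v₀ τ ^ 2))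
        + 4 * p₃ * dC p₃ ρ W τ₀ u₀ v₀ τ * rC p₃ ρ W τ₀ u₀ v₀ τ) τ := by
  have hθ : HasDerivAt (fun τ : ℝ => 8 * p₃ * ρ * τ + τ₀) (8 * p₃ * ρ) τ := by
    simpa using ((hasDerivAt_id τ).const_mul (8 * p₃ * ρ)).add_const τ₀
  have hFpos : ∀ t, 0 < FC p₃ ρ W τ₀ u₀ t := fun t => FC_pos hW p₃ ρ τ₀ u₀ t
  have hF : HasDerivAt (FC p₃ ρ W τ₀ u₀)
      (W * (Real.sinh (8 * p₃ * ρ * τ + τ₀) * (8 * p₃ * ρ))) τ := by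
    exact ((hθ.cosh).const_mul W).add_const (u₀ ^ 2)
  have hSpos : 0 < Real.sqrt (FC p₃ ρ W τ₀ u₀ τ) := Real.sqrt_pos.2 (hFpos τ)
  have hS2 : Real.sqrt (FC p₃ ρ W τ₀ u₀ τ) ^ 2 = FC p₃ ρ W τ₀ u₀ τ := Real.sq_sqrt (hFpos τ).le
  have hsqF : HasDerivAt (fun t => Real.sqrt (FC p₃ ρ W τ₀ u₀ t))
      ((W * (Real.sinh (8 * p₃ * ρ * τ + τ₀) * (8 * p₃ * ρ))) /
        (2 * Real.sqrt (FC p₃ ρ W τ₀ u₀ τ))) τ := hF.sqrt (hFpos τ).ne'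
  have hterm1 : HasDerivAt (fun t => 2 * ρ / Real.sqrt (FC p₃ ρ W τ₀ u₀ t))
      ((0 * Real.sqrt (FC p₃ ρ W τ₀ u₀ τ) - 2 * ρ *
          ((W * (Real.sinh (8 * p₃ * ρ * τ + τ₀) * (8 * p₃ * ρ))) /
            (2 * Real.sqrt (FC p₃ ρ W τ₀ u₀ τ)))) / Real.sqrt (FC p₃ ρ W τ₀ u₀ τ) ^ 2) τ :=
    (hasDerivAt_const τ (2 * ρ)).div hsqF hSpos.ne'
  have hterm2 : HasDerivAt (fun t => 4 * ρ ^ 2 / FC p₃ ρ W τ₀ u₀ t)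
      ((0 * FC p₃ ρ W τ₀ u₀ τ - 4 * ρ ^ 2 *
          (W * (Real.sinh (8 * p₃ * ρ * τ + τ₀) * (8 * p₃ * ρ)))) / FC p₃ ρ W τ₀ u₀ τ ^ 2) τ :=
    (hasDerivAt_const τ (4 * ρ ^ 2)).div hF (hFpos τ).ne'
  have hnum : HasDerivAt (fun t => -(ρ * W * Real.sinh (8 * p₃ * ρ * t + τ₀)))
      (-(ρ * W * (Real.cosh (8 * p₃ * ρ * τ + τ₀) * (8 * p₃ * ρ)))) τ := by
    exact ((hθ.sinh).const_mul (ρ * W)).neg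
  have hcs : Real.cosh (8 * p₃ * ρ * τ + τ₀) ^ 2 - Real.sinh (8 * p₃ * ρ * τ + τ₀) ^ 2 = 1 :=
    Real.cosh_sq_sub_sinh_sq _
  refine ⟨?_, ?_, ?_⟩
  · have h := ((hterm1.const_mul (u₀ / 2)).add (hterm2.const_mul (v₀ / 2)))
    refine h.congr_deriv (Eq.symm ?_)
    simp only [dC, rC, iC]
    set S := Real.sqrt (FC p₃ ρ W τ₀ u₀ τ) with hSdef
    rw [← hS2]
    field_simp
    ring
  · have h := ((hterm1.const_mul (u₀ / 2)).sub (hterm2.const_mul (v₀ / 2)))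
    refine h.congr_deriv (Eq.symm ?_)
    simp only [dC, rC, iC]
    set S := Real.sqrt (FC p₃ ρ W τ₀ u₀ τ) with hSdef
    rw [← hS2]
    field_simp
    ring
  · have h := hnum.div hF (hFpos τ).ne'
    refine h.congr_deriv (Eq.symm ?_)
    simp only [dC, rC, iC, FC]
    set S := Real.sqrt (FC p₃ ρ W τ₀ u₀ τ) with hSdef
    have hS2' : S ^ 2 = W * Real.cosh (8 * p₃ * ρ * τ + τ₀) + u₀ ^ 2 := hS2
    set c := Real.cosh (8 * p₃ * ρ * τ + τ₀) with hcdef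
    set s := Real.sinh (8 * p₃ * ρ * τ + τ₀) with hsdef
    rw [show W * c + u₀ ^ 2 = S ^ 2 from hS2'.symm]
    field_simp
    ring_nf
    linear_combination (p₃ * ρ^2 * (-32 * S^2) * (u₀^2 - W * c)) * hS2'
      - (p₃ * ρ^2 * (-32 * S^2) * W^2) * hcs
      - (p₃ * ρ^2 * (-32 * S^2)) * hWsq
      - (32 * p₃ * ρ^2 * (W^2 * s^2 + 8 * ρ^2 * v₀^2 - S^2 * W * c)) * Real.sq_sqrt (sq_nonneg S)

set_option maxHeartbeats 2000000 in
/-- Case 11 (combination of p₁- and p₃-components), case p₁ = 3p₃: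
explicit solution. -/
theorem stmt_10 (p₁ p₃ : ℝ) (hp₃ : 0 < p₃) (hp₁ : p₁ = 3 * p₃) (D R I : ℝ → ℝ)
    (hD : ∀ τ, HasDerivAt D (2 * I τ * (p₁ * D τ - p₃ * R τ)) τ)
    (hR : ∀ τ, HasDerivAt R (2 * I τ * (p₁ * R τ - p₃ * D τ)) τ)
    (hI : ∀ τ, HasDerivAt I (-(2 * p₁ * (D τ ^ 2 + R τ ^ 2)) + 4 * p₃ * D τ * R τ) τ)
    (ρ : ℝ) (hρ : ρ = Real.sqrt (D 0 ^ 2 + R 0 ^ 2 + I 0 ^ 2))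
    (hne₁ : (D 0, R 0, I 0) ≠ (0, 0, ρ))
    (hne₂ : (D 0, R 0, I 0) ≠ (0, 0, -ρ))
    (W τ₀ : ℝ)
    (hW : W = Real.sqrt (8 * ρ ^ 2 * (D 0 - R 0) ^ 2 + (D 0 + R 0) ^ 4))
    (hτ₀ : τ₀ = -(Real.sign (I 0)) * arcosh ((4 * ρ ^ 2 - (D 0 + R 0) ^ 2) / W)) :
    ∀ τ : ℝ,
      D τ = (D 0 + R 0) / 2 *
              (2 * ρ / (W * Real.cosh (8 * p₃ * ρ * τ + τ₀) + (D 0 + R 0) ^ 2) ^ ((1:ℝ)/2))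
            + (D 0 - R 0) / 2 *
              (4 * ρ ^ 2 / (W * Real.cosh (8 * p₃ * ρ * τ + τ₀) + (D 0 + R 0) ^ 2)) ∧
      R τ = (D 0 + R 0) / 2 *
              (2 * ρ / (W * Real.cosh (8 * p₃ * ρ * τ + τ₀) + (D 0 + R 0) ^ 2) ^ ((1:ℝ)/2))
            - (D 0 - R 0) / 2 *
              (4 * ρ ^ 2 / (W * Real.cosh (8 * p₃ * ρ * τ + τ₀) + (D 0 + R 0) ^ 2)) ∧
      I τ = -(ρ * W * Real.sinh (8 * p₃ * ρ * τ + τ₀))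
              / (W * Real.cosh (8 * p₃ * ρ * τ + τ₀) + (D 0 + R 0) ^ 2) := by
  subst hp₁
  -- basic facts
  have h0 : (0:ℝ) ≤ D 0 ^ 2 + R 0 ^ 2 + I 0 ^ 2 := by positivity
  have hρsq : D 0 ^ 2 + R 0 ^ 2 + I 0 ^ 2 = ρ ^ 2 := by
    rw [hρ]; exact (Real.sq_sqrt h0).symm
  have hρ0 : 0 ≤ ρ := hρ ▸ Real.sqrt_nonneg _
  have hρpos : 0 < ρ := by
    rcases hρ0.eq_or_lt with h | h
    · exfalso
      have hD0 : D 0 = 0 := by nlinarith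
      have hR0 : R 0 = 0 := by nlinarith
      have hI0 : I 0 = 0 := by nlinarith
      exact hne₁ (by rw [hD0, hR0, hI0, ← h])
    · exact h
  have hWsq : W ^ 2 = 8 * ρ ^ 2 * (D 0 - R 0) ^ 2 + (D 0 + R 0) ^ 4 := by
    rw [hW]; exact Real.sq_sqrt (by positivity)
  have hW0 : 0 ≤ W := hW ▸ Real.sqrt_nonneg _
  have hWpos : 0 < W := by
    rcases hW0.eq_or_lt with h | h
    · exfalso
      have h2 : (8:ℝ) * ρ ^ 2 * (D 0 - R 0) ^ 2 + (D 0 + R 0) ^ 4 = 0 := by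
        rw [← hWsq, ← h]; ring
      have hv2 : (D 0 - R 0) ^ 2 ≤ 0 := by
        nlinarith [sq_nonneg ((D 0 + R 0) ^ 2), mul_pos hρpos hρpos]
      have hv : D 0 - R 0 = 0 := by
        have := sq_nonneg (D 0 - R 0)
        exact sq_eq_zero_iff.1 (le_antisymm hv2 this)
      have hu4 : (D 0 + R 0) ^ 4 = 0 := by rw [hv] at h2; nlinarith [h2]
      have hu4' : ((D 0 + R 0) ^ 2) ^ 2 = 0 := by linear_combination hu4
      have hu : D 0 + R 0 = 0 := sq_eq_zero_iff.1 (sq_eq_zero_iff.1 hu4')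
      have hD0 : D 0 = 0 := by linarith
      have hR0 : R 0 = 0 := by linarith
      have hI2 : I 0 ^ 2 = ρ ^ 2 := by nlinarith
      have hfac : (I 0 - ρ) * (I 0 + ρ) = 0 := by nlinarith
      rcases mul_eq_zero.1 hfac with h' | h'
      · exact hne₁ (by rw [hD0, hR0, show I 0 = ρ from by linarith])
      · exact hne₂ (by rw [hD0, hR0, show I 0 = -ρ from by linarith])
    · exact h
  -- W ≤ 4ρ² - u₀²
  have key : (4 * ρ ^ 2 - (D 0 + R 0) ^ 2) ^ 2 = W ^ 2 + 16 * ρ ^ 2 * I 0 ^ 2 := by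
    linear_combination -hWsq - 16 * ρ ^ 2 * hρsq
  have hu2 : (D 0 + R 0) ^ 2 ≤ 2 * ρ ^ 2 := by
    nlinarith [sq_nonneg (D 0 - R 0), sq_nonneg (I 0)]
  have hWle : W ≤ 4 * ρ ^ 2 - (D 0 + R 0) ^ 2 := by
    nlinarith [key, hu2, hW0, mul_pos hρpos hρpos, mul_nonneg (sq_nonneg ρ) (sq_nonneg (I 0))]
  have hx1 : 1 ≤ (4 * ρ ^ 2 - (D 0 + R 0) ^ 2) / W := (le_div_iff₀ hWpos).2 (by linarith)
  -- sqrt (x² - 1) = 4ρ|I 0|/W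
  have hxsq : ((4 * ρ ^ 2 - (D 0 + R 0) ^ 2) / W) ^ 2 - 1 = (4 * ρ * |I 0| / W) ^ 2 := by
    have habs : |I 0| ^ 2 = I 0 ^ 2 := sq_abs _
    field_simp
    linear_combination key - 16 * ρ ^ 2 * habs
  have hsqx : Real.sqrt (((4 * ρ ^ 2 - (D 0 + R 0) ^ 2) / W) ^ 2 - 1) = 4 * ρ * |I 0| / W := by
    rw [hxsq]; exact Real.sqrt_sq (by positivity)
  -- cosh τ₀ and sinh τ₀
  have hτc : Real.cosh τ₀ = (4 * ρ ^ 2 - (D 0 + R 0) ^ 2) / W ∧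
      W * Real.sinh τ₀ = -(4 * ρ * I 0) := by
    rcases lt_trichotomy (I 0) 0 with h | h | h
    · rw [hτ₀, Real.sign_of_neg h]
      rw [show -(-1:ℝ) * arcosh ((4 * ρ ^ 2 - (D 0 + R 0) ^ 2) / W)
            = arcosh ((4 * ρ ^ 2 - (D 0 + R 0) ^ 2) / W) by ring]
      refine ⟨cosh_arcosh hx1, ?_⟩
      rw [sinh_arcosh hx1, hsqx, abs_of_neg h]
      field_simp
    · have e : τ₀ = 0 := by rw [hτ₀, h, Real.sign_zero]; ring
      have hA : ((4 * ρ ^ 2 - (D 0 + R 0) ^ 2) - W) * ((4 * ρ ^ 2 - (D 0 + R 0) ^ 2) + W) = 0 := by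
        rw [h] at key
        linear_combination key
      have hAW : 4 * ρ ^ 2 - (D 0 + R 0) ^ 2 = W := by
        rcases mul_eq_zero.1 hA with h' | h'
        · linarith
        · linarith
      refine ⟨?_, ?_⟩
      · rw [e, Real.cosh_zero, hAW, div_self hWpos.ne']
      · rw [e, Real.sinh_zero, h]; ring
    · rw [hτ₀, Real.sign_of_pos h]
      rw [show -(1:ℝ) * arcosh ((4 * ρ ^ 2 - (D 0 + R 0) ^ 2) / W)
            = -arcosh ((4 * ρ ^ 2 - (D 0 + R 0) ^ 2) / W) by ring]
      rw [Real.cosh_neg, Real.sinh_neg]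
      refine ⟨cosh_arcosh hx1, ?_⟩
      rw [sinh_arcosh hx1, hsqx, abs_of_pos h]
      field_simp
  -- initial values of the candidate
  have hF0 : FC p₃ ρ W τ₀ (D 0 + R 0) 0 = 4 * ρ ^ 2 := by
    unfold FC
    rw [show 8 * p₃ * ρ * 0 + τ₀ = τ₀ by ring, hτc.1]
    field_simp
    ring
  have hsq4 : Real.sqrt (4 * ρ ^ 2) = 2 * ρ := by
    rw [show (4:ℝ) * ρ ^ 2 = (2 * ρ) ^ 2 by ring]
    exact Real.sqrt_sq (by positivity)
  have hd0 : dC p₃ ρ W τ₀ (D 0 + R 0) (D 0 - R 0) 0 = D 0 := by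
    unfold dC
    rw [hF0, hsq4]
    field_simp
    ring
  have hr0 : rC p₃ ρ W τ₀ (D 0 + R 0) (D 0 - R 0) 0 = R 0 := by
    unfold rC
    rw [hF0, hsq4]
    field_simp
    ring
  have hi0 : iC p₃ ρ W τ₀ (D 0 + R 0) 0 = I 0 := by
    unfold iC
    rw [hF0, show 8 * p₃ * ρ * 0 + τ₀ = τ₀ by ring, mul_assoc, hτc.2]
    field_simp
  -- conservation laws
  have hconsD : ∀ τ, D τ ^ 2 + R τ ^ 2 + I τ ^ 2 = ρ ^ 2 := by
    intro τ
    rw [conserved (3 * p₃) p₃ D R I hD hR hI τ, hρsq]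
  have hcd := fun τ => cand_deriv p₃ ρ W τ₀ (D 0 + R 0) (D 0 - R 0) hWpos hWsq τ
  have hconsC : ∀ τ, dC p₃ ρ W τ₀ (D 0 + R 0) (D 0 - R 0) τ ^ 2
      + rC p₃ ρ W τ₀ (D 0 + R 0) (D 0 - R 0) τ ^ 2 + iC p₃ ρ W τ₀ (D 0 + R 0) τ ^ 2 = ρ ^ 2 := by
    intro τ
    rw [conserved (3 * p₃) p₃ _ _ _ (fun τ => (hcd τ).1) (fun τ => (hcd τ).2.1)
      (fun τ => (hcd τ).2.2) τ, hd0, hr0, hi0, hρsq]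
  have habs : ∀ a : ℝ, a ^ 2 ≤ ρ ^ 2 → |a| ≤ ρ := by
    intro a ha
    have h := Real.sqrt_le_sqrt ha
    rwa [Real.sqrt_sq_eq_abs, Real.sqrt_sq hρ0] at h
  -- the vector field and its Lipschitz property
  set V : ℝ × ℝ × ℝ → ℝ × ℝ × ℝ := fun x =>
    (2 * x.2.2 * (3 * p₃ * x.1 - p₃ * x.2.1),
     2 * x.2.2 * (3 * p₃ * x.2.1 - p₃ * x.1),
     -(2 * (3 * p₃) * (x.1 ^ 2 + x.2.1 ^ 2)) + 4 * p₃ * x.1 * x.2.1) with hV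
  set sB : Set (ℝ × ℝ × ℝ) := {x | |x.1| ≤ ρ ∧ |x.2.1| ≤ ρ ∧ |x.2.2| ≤ ρ} with hsB
  set K : NNReal := ⟨32 * p₃ * ρ, by positivity⟩ with hK
  have hLip : LipschitzOnWith K V sB := by
    rw [lipschitzOnWith_iff_dist_le_mul]
    rintro ⟨x1, x2, x3⟩ hx ⟨y1, y2, y3⟩ hy
    obtain ⟨hx1, hx2, hx3⟩ := hx
    obtain ⟨hy1, hy2, hy3⟩ := hy
    simp only at hx1 hx2 hx3 hy1 hy2 hy3
    set m := dist ((x1, x2, x3) : ℝ × ℝ × ℝ) ((y1, y2, y3) : ℝ × ℝ × ℝ) with hm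
    have hm' : m = max |x1 - y1| (max |x2 - y2| |x3 - y3|) := by
      rw [hm, Prod.dist_eq, Prod.dist_eq, Real.dist_eq, Real.dist_eq, Real.dist_eq]
    have h1 : |x1 - y1| ≤ m := by rw [hm']; exact le_max_left _ _
    have h2 : |x2 - y2| ≤ m := by
      rw [hm']; exact le_trans (le_max_left _ _) (le_max_right _ _)
    have h3 : |x3 - y3| ≤ m := by
      rw [hm']; exact le_trans (le_max_right _ _) (le_max_right _ _)
    obtain ⟨hx1l, hx1r⟩ := abs_le.1 hx1
    obtain ⟨hx2l, hx2r⟩ := abs_le.1 hx2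
    obtain ⟨hx3l, hx3r⟩ := abs_le.1 hx3
    obtain ⟨hy1l, hy1r⟩ := abs_le.1 hy1
    obtain ⟨hy2l, hy2r⟩ := abs_le.1 hy2
    obtain ⟨hy3l, hy3r⟩ := abs_le.1 hy3
    obtain ⟨h1l, h1r⟩ := abs_le.1 h1
    obtain ⟨h2l, h2r⟩ := abs_le.1 h2
    obtain ⟨h3l, h3r⟩ := abs_le.1 h3
    have hKc : (K : ℝ) = 32 * p₃ * ρ := rfl
    have hm0 : 0 ≤ m := hm ▸ dist_nonneg
    rw [hKc, hV]
    simp only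
    rw [Prod.dist_eq, Prod.dist_eq, Real.dist_eq, Real.dist_eq, Real.dist_eq]
    dsimp only
    have hpm : 0 ≤ p₃ * ρ * m := by positivity
    refine max_le ?_ (max_le ?_ ?_)
    · rw [abs_le]
      constructor <;>
      linarith [mul_nonneg (mul_nonneg hp₃.le (by linarith : (0:ℝ) ≤ m - (x3 - y3)))
          (by linarith : (0:ℝ) ≤ 4 * ρ + (3 * x1 - x2)),
        mul_nonneg (mul_nonneg hp₃.le (by linarith : (0:ℝ) ≤ m + (x3 - y3)))
          (by linarith : (0:ℝ) ≤ 4 * ρ - (3 * x1 - x2)),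
        mul_nonneg (mul_nonneg hp₃.le (by linarith : (0:ℝ) ≤ m - (x3 - y3)))
          (by linarith : (0:ℝ) ≤ 4 * ρ - (3 * x1 - x2)),
        mul_nonneg (mul_nonneg hp₃.le (by linarith : (0:ℝ) ≤ m + (x3 - y3)))
          (by linarith : (0:ℝ) ≤ 4 * ρ + (3 * x1 - x2)),
        mul_nonneg (mul_nonneg hp₃.le (by linarith : (0:ℝ) ≤ ρ - y3))
          (by linarith : (0:ℝ) ≤ 4 * m + (3 * (x1 - y1) - (x2 - y2))),
        mul_nonneg (mul_nonneg hp₃.le (by linarith : (0:ℝ) ≤ ρ + y3))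
          (by linarith : (0:ℝ) ≤ 4 * m - (3 * (x1 - y1) - (x2 - y2))),
        mul_nonneg (mul_nonneg hp₃.le (by linarith : (0:ℝ) ≤ ρ - y3))
          (by linarith : (0:ℝ) ≤ 4 * m - (3 * (x1 - y1) - (x2 - y2))),
        mul_nonneg (mul_nonneg hp₃.le (by linarith : (0:ℝ) ≤ ρ + y3))
          (by linarith : (0:ℝ) ≤ 4 * m + (3 * (x1 - y1) - (x2 - y2))),
        hpm]
    · rw [abs_le]
      constructor <;>
      linarith [mul_nonneg (mul_nonneg hp₃.le (by linarith : (0:ℝ) ≤ m - (x3 - y3)))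
          (by linarith : (0:ℝ) ≤ 4 * ρ + (3 * x2 - x1)),
        mul_nonneg (mul_nonneg hp₃.le (by linarith : (0:ℝ) ≤ m + (x3 - y3)))
          (by linarith : (0:ℝ) ≤ 4 * ρ - (3 * x2 - x1)),
        mul_nonneg (mul_nonneg hp₃.le (by linarith : (0:ℝ) ≤ m - (x3 - y3)))
          (by linarith : (0:ℝ) ≤ 4 * ρ - (3 * x2 - x1)),
        mul_nonneg (mul_nonneg hp₃.le (by linarith : (0:ℝ) ≤ m + (x3 - y3)))
          (by linarith : (0:ℝ) ≤ 4 * ρ + (3 * x2 - x1)),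
        mul_nonneg (mul_nonneg hp₃.le (by linarith : (0:ℝ) ≤ ρ - y3))
          (by linarith : (0:ℝ) ≤ 4 * m + (3 * (x2 - y2) - (x1 - y1))),
        mul_nonneg (mul_nonneg hp₃.le (by linarith : (0:ℝ) ≤ ρ + y3))
          (by linarith : (0:ℝ) ≤ 4 * m - (3 * (x2 - y2) - (x1 - y1))),
        mul_nonneg (mul_nonneg hp₃.le (by linarith : (0:ℝ) ≤ ρ - y3))
          (by linarith : (0:ℝ) ≤ 4 * m - (3 * (x2 - y2) - (x1 - y1))),
        mul_nonneg (mul_nonneg hp₃.le (by linarith : (0:ℝ) ≤ ρ + y3))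
          (by linarith : (0:ℝ) ≤ 4 * m + (3 * (x2 - y2) - (x1 - y1))),
        hpm]
    · rw [abs_le]
      constructor <;>
      linarith [mul_nonneg (mul_nonneg hp₃.le (by linarith : (0:ℝ) ≤ 2 * ρ - (x1 + y1)))
          (by linarith : (0:ℝ) ≤ m - (x1 - y1)),
        mul_nonneg (mul_nonneg hp₃.le (by linarith : (0:ℝ) ≤ 2 * ρ + (x1 + y1)))
          (by linarith : (0:ℝ) ≤ m + (x1 - y1)),
        mul_nonneg (mul_nonneg hp₃.le (by linarith : (0:ℝ) ≤ 2 * ρ - (x1 + y1)))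
          (by linarith : (0:ℝ) ≤ m + (x1 - y1)),
        mul_nonneg (mul_nonneg hp₃.le (by linarith : (0:ℝ) ≤ 2 * ρ + (x1 + y1)))
          (by linarith : (0:ℝ) ≤ m - (x1 - y1)),
        mul_nonneg (mul_nonneg hp₃.le (by linarith : (0:ℝ) ≤ 2 * ρ - (x2 + y2)))
          (by linarith : (0:ℝ) ≤ m - (x2 - y2)),
        mul_nonneg (mul_nonneg hp₃.le (by linarith : (0:ℝ) ≤ 2 * ρ + (x2 + y2)))
          (by linarith : (0:ℝ) ≤ m + (x2 - y2)),
        mul_nonneg (mul_nonneg hp₃.le (by linarith : (0:ℝ) ≤ 2 * ρ - (x2 + y2)))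
          (by linarith : (0:ℝ) ≤ m + (x2 - y2)),
        mul_nonneg (mul_nonneg hp₃.le (by linarith : (0:ℝ) ≤ 2 * ρ + (x2 + y2)))
          (by linarith : (0:ℝ) ≤ m - (x2 - y2)),
        mul_nonneg (mul_nonneg hp₃.le (by linarith : (0:ℝ) ≤ ρ - x1))
          (by linarith : (0:ℝ) ≤ m - (x2 - y2)),
        mul_nonneg (mul_nonneg hp₃.le (by linarith : (0:ℝ) ≤ ρ + x1))
          (by linarith : (0:ℝ) ≤ m + (x2 - y2)),
        mul_nonneg (mul_nonneg hp₃.le (by linarith : (0:ℝ) ≤ ρ - x1))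
          (by linarith : (0:ℝ) ≤ m + (x2 - y2)),
        mul_nonneg (mul_nonneg hp₃.le (by linarith : (0:ℝ) ≤ ρ + x1))
          (by linarith : (0:ℝ) ≤ m - (x2 - y2)),
        mul_nonneg (mul_nonneg hp₃.le (by linarith : (0:ℝ) ≤ ρ - y2))
          (by linarith : (0:ℝ) ≤ m - (x1 - y1)),
        mul_nonneg (mul_nonneg hp₃.le (by linarith : (0:ℝ) ≤ ρ + y2))
          (by linarith : (0:ℝ) ≤ m + (x1 - y1)),
        mul_nonneg (mul_nonneg hp₃.le (by linarith : (0:ℝ) ≤ ρ - y2))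
          (by linarith : (0:ℝ) ≤ m + (x1 - y1)),
        mul_nonneg (mul_nonneg hp₃.le (by linarith : (0:ℝ) ≤ ρ + y2))
          (by linarith : (0:ℝ) ≤ m - (x1 - y1)),
        hpm]
  -- derivatives of the combined trajectories
  have hfd : ∀ t, HasDerivAt (fun t => (D t, R t, I t)) (V (D t, R t, I t)) t := by
    intro t
    exact (hD t).prodMk ((hR t).prodMk (hI t))
  have hgd : ∀ t, HasDerivAt
      (fun t => (dC p₃ ρ W τ₀ (D 0 + R 0) (D 0 - R 0) t,
        rC p₃ ρ W τ₀ (D 0 + R 0) (D 0 - R 0) t, iC p₃ ρ W τ₀ (D 0 + R 0) t))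
      (V (dC p₃ ρ W τ₀ (D 0 + R 0) (D 0 - R 0) t,
        rC p₃ ρ W τ₀ (D 0 + R 0) (D 0 - R 0) t, iC p₃ ρ W τ₀ (D 0 + R 0) t)) t := by
    intro t
    exact ((hcd t).1).prodMk (((hcd t).2.1).prodMk ((hcd t).2.2))
  have hfs : ∀ t : ℝ, (D t, R t, I t) ∈ sB := by
    intro t
    have c1 : D t ^ 2 ≤ ρ ^ 2 := by linarith [hconsD t, sq_nonneg (R t), sq_nonneg (I t)]
    have c2 : R t ^ 2 ≤ ρ ^ 2 := by linarith [hconsD t, sq_nonneg (D t), sq_nonneg (I t)]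
    have c3 : I t ^ 2 ≤ ρ ^ 2 := by linarith [hconsD t, sq_nonneg (D t), sq_nonneg (R t)]
    exact ⟨habs _ c1, habs _ c2, habs _ c3⟩
  have hgs : ∀ t : ℝ, (dC p₃ ρ W τ₀ (D 0 + R 0) (D 0 - R 0) t,
      rC p₃ ρ W τ₀ (D 0 + R 0) (D 0 - R 0) t, iC p₃ ρ W τ₀ (D 0 + R 0) t) ∈ sB := by
    intro t
    have c1 : dC p₃ ρ W τ₀ (D 0 + R 0) (D 0 - R 0) t ^ 2 ≤ ρ ^ 2 := by
      linarith [hconsC t, sq_nonneg (rC p₃ ρ W τ₀ (D 0 + R 0) (D 0 - R 0) t),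
        sq_nonneg (iC p₃ ρ W τ₀ (D 0 + R 0) t)]
    have c2 : rC p₃ ρ W τ₀ (D 0 + R 0) (D 0 - R 0) t ^ 2 ≤ ρ ^ 2 := by
      linarith [hconsC t, sq_nonneg (dC p₃ ρ W τ₀ (D 0 + R 0) (D 0 - R 0) t),
        sq_nonneg (iC p₃ ρ W τ₀ (D 0 + R 0) t)]
    have c3 : iC p₃ ρ W τ₀ (D 0 + R 0) t ^ 2 ≤ ρ ^ 2 := by
      linarith [hconsC t, sq_nonneg (dC p₃ ρ W τ₀ (D 0 + R 0) (D 0 - R 0) t),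
        sq_nonneg (rC p₃ ρ W τ₀ (D 0 + R 0) (D 0 - R 0) t)]
    exact ⟨habs _ c1, habs _ c2, habs _ c3⟩
  have heq0 : ((D 0, R 0, I 0) : ℝ × ℝ × ℝ)
      = (dC p₃ ρ W τ₀ (D 0 + R 0) (D 0 - R 0) 0,
        rC p₃ ρ W τ₀ (D 0 + R 0) (D 0 - R 0) 0, iC p₃ ρ W τ₀ (D 0 + R 0) 0) := by
    rw [hd0, hr0, hi0]
  have main : ∀ τ, D τ = dC p₃ ρ W τ₀ (D 0 + R 0) (D 0 - R 0) τ
      ∧ R τ = rC p₃ ρ W τ₀ (D 0 + R 0) (D 0 - R 0) τ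
      ∧ I τ = iC p₃ ρ W τ₀ (D 0 + R 0) τ := by
    intro τ
    have ht0 : (0:ℝ) ∈ Set.Ioo (-(|τ| + 1)) (|τ| + 1) := by
      rw [Set.mem_Ioo]
      constructor <;> nlinarith [abs_nonneg τ]
    have huniq := ODE_solution_unique_of_mem_Icc (v := fun _ => V) (s := fun _ => sB)
      (K := K) (fun _ _ => hLip) ht0
      (fun t _ => ((hfd t).continuousAt).continuousWithinAt)
      (fun t _ => hfd t) (fun t _ => hfs t)
      (fun t _ => ((hgd t).continuousAt).continuousWithinAt)
      (fun t _ => hgd t) (fun t _ => hgs t) heq0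
    have hmem : τ ∈ Set.Icc (-(|τ| + 1)) (|τ| + 1) := by
      rw [Set.mem_Icc]
      constructor <;> nlinarith [neg_abs_le τ, le_abs_self τ]
    have h := huniq hmem
    simpa [Prod.ext_iff] using h
  intro τ
  obtain ⟨e1, e2, e3⟩ := main τ
  refine ⟨?_, ?_, ?_⟩
  · rw [e1]
    simp only [dC, FC, Real.sqrt_eq_rpow]
  · rw [e2]
    simp only [rC, FC, Real.sqrt_eq_rpow]
  · rw [e3]
    simp only [iC, FC]
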